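/- Fix L ≥ 1, dimensions d_0,…,d_L and n ≥ 1, a fixed input A_0 ∈ ℝ^{d_0×n}, twice continuously differentiable maps Φ_ℓ : ℝ^{d_1×n}×…×ℝ^{d_ℓ×n} → ℝ^{d_ℓ×n} for ℓ = 1,…,L, and a twice continuously differentiable loss f : ℝ^{d_1×n}×…×ℝ^{d_L×n} → ℝ. For W = (W_1,…,W_L) with W_ℓ ∈ ℝ^{d_ℓ×d_{ℓ−1}}, define recursively X_ℓ(W) := W_ℓ A_{ℓ−1}(W) and A_ℓ(W) := Φ_ℓ(X_1(W),…,X_ℓ(W)), and set 𝓛(W) := f(X_1(W),…,X_L(W)). Fix W, write X := (X_1(W),…,X_L(W)), and define J_{Φ,ℓ} := sup_{‖U‖_F=1}‖DΦ_ℓ(X_1,…,X_ℓ)[U]‖_F, H_{Φ,ℓ} := sup_{‖U‖_F=1}‖D²Φ_ℓ(X_1,…,X_ℓ)[U,U]‖_F, J_Φ := max_ℓ J_{Φ,ℓ}, H_Φ := max_ℓ H_{Φ,ℓ}, J_f := ‖∇f(X)‖_F, H_f := sup_{‖U‖_F=1}|D²f(X)[U,U]|, W_* := max_ℓ ‖W_ℓ‖_op,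 Γ := √2·(1+2J_Φ²W_*²)^{L/2}, and Θ := (1+J_Φ W_*)^{L−1}. Then, for C_F := Γ²H_f + J_f Θ W_* H_Φ Γ² L + J_f² Θ Γ² L and C_op := Θ J_Φ², every perturbation ΔW = (ΔW_1,…,ΔW_L) satisfies |⟨ΔW, ∇²𝓛(W)·ΔW⟩| ≤ C_F·Σ_{ℓ=1}^L ‖ΔW_ℓ A_{ℓ−1}(W)‖_F² + C_op·Σ_{ℓ=1}^L ‖ΔW_ℓ‖_op². -/

import Mathlib

noncomputable section

/-- Spectral (largest-singular-value) norm of a real matrix. -/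
def opNormM {a b : ℕ} (A : Matrix (Fin a) (Fin b) ℝ) : ℝ :=
  ‖LinearMap.toContinuousLinearMap (Matrix.toEuclideanLin A)‖

/-- The space of tuples `(X_1,…,X_L)` of preactivations, `X_ℓ ∈ ℝ^{d_ℓ×n}`; here the number of
layers is `L = L₀ + 1` and `dims ℓ = d_ℓ` for `ℓ = 0,…,L`. -/
abbrev XTup (L₀ n : ℕ) (dims : Fin (L₀ + 2) → ℕ) : Type :=
  ∀ i : Fin (L₀ + 1), Fin (dims i.succ) → Fin n → ℝ

/-- The space of weight tuples `(W_1,…,W_L)`, `W_ℓ ∈ ℝ^{d_ℓ×d_{ℓ−1}}`. -/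
abbrev WTup (L₀ : ℕ) (dims : Fin (L₀ + 2) → ℕ) : Type :=
  ∀ ℓ : Fin (L₀ + 1), Fin (dims ℓ.succ) → Fin (dims ℓ.castSucc) → ℝ

/-- Frobenius norm of a tuple of matrices: square root of the sum of all squared entries. -/
def tupNorm {L₀ n : ℕ} {dims : Fin (L₀ + 2) → ℕ} (U : XTup L₀ n dims) : ℝ :=
  Real.sqrt (∑ ℓ, ∑ i, ∑ j, (U ℓ i j) ^ 2)

/-- Frobenius norm of a single matrix (as a function). -/
def matFrobNorm {a b : ℕ} (M : Fin a → Fin b → ℝ) : ℝ :=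
  Real.sqrt (∑ i, ∑ j, (M i j) ^ 2)


/-! ### Auxiliary norm lemmas -/

def matEquiv {a b : ℕ} : (Fin a → Fin b → ℝ) ≃ₗ[ℝ] EuclideanSpace ℝ (Fin a × Fin b) where
  toFun M := WithLp.toLp 2 (fun p : Fin a × Fin b => M p.1 p.2)
  invFun x := fun i j => x (i, j)
  map_add' _ _ := rfl
  map_smul' _ _ := rfl
  left_inv _ := rfl
  right_inv _ := rfl

lemma matFrobNorm_eq {a b : ℕ} (M : Fin a → Fin b → ℝ) :
    matFrobNorm M = ‖matEquiv M‖ := by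
  rw [EuclideanSpace.norm_eq, matFrobNorm]
  congr 1
  rw [Fintype.sum_prod_type]
  refine Finset.sum_congr rfl fun i _ => Finset.sum_congr rfl fun j _ => ?_
  rw [Real.norm_eq_abs, sq_abs]
  rfl

def tupEquiv {L₀ n : ℕ} {dims : Fin (L₀ + 2) → ℕ} :
    XTup L₀ n dims ≃ₗ[ℝ]
      EuclideanSpace ℝ ((ℓ : Fin (L₀ + 1)) × (Fin (dims ℓ.succ) × Fin n)) where
  toFun U := WithLp.toLp 2 (fun p : (ℓ : Fin (L₀ + 1)) × (Fin (dims ℓ.succ) × Fin n) => U p.1 p.2.1 p.2.2)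
  invFun x := fun ℓ i j => x ⟨ℓ, (i, j)⟩
  map_add' _ _ := rfl
  map_smul' _ _ := rfl
  left_inv _ := rfl
  right_inv _ := rfl

lemma tupNorm_eq {L₀ n : ℕ} {dims : Fin (L₀ + 2) → ℕ} (U : XTup L₀ n dims) :
    tupNorm U = ‖tupEquiv U‖ := by
  rw [EuclideanSpace.norm_eq, tupNorm]
  congr 1
  rw [← Finset.univ_sigma_univ, Finset.sum_sigma]
  refine Finset.sum_congr rfl fun ℓ _ => ?_
  rw [Fintype.sum_prod_type]
  refine Finset.sum_congr rfl fun i _ => Finset.sum_congr rfl fun j _ => ?_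
  rw [Real.norm_eq_abs, sq_abs]
  rfl

section basic
variable {a b : ℕ} {L₀ n : ℕ} {dims : Fin (L₀ + 2) → ℕ}

lemma matFrobNorm_nonneg (M : Fin a → Fin b → ℝ) : 0 ≤ matFrobNorm M := by
  rw [matFrobNorm_eq]; exact norm_nonneg _

lemma matFrobNorm_zero : matFrobNorm (0 : Fin a → Fin b → ℝ) = 0 := by
  rw [matFrobNorm_eq, map_zero, norm_zero]

lemma matFrobNorm_add_le (M B : Fin a → Fin b → ℝ) :
    matFrobNorm (M + B) ≤ matFrobNorm M + matFrobNorm B := by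
  simp only [matFrobNorm_eq, map_add]; exact norm_add_le _ _

lemma matFrobNorm_smul (r : ℝ) (M : Fin a → Fin b → ℝ) :
    matFrobNorm (r • M) = |r| * matFrobNorm M := by
  simp only [matFrobNorm_eq, map_smul, norm_smul, Real.norm_eq_abs]

lemma tupNorm_nonneg (U : XTup L₀ n dims) : 0 ≤ tupNorm U := by
  rw [tupNorm_eq]; exact norm_nonneg _

lemma tupNorm_smul (r : ℝ) (U : XTup L₀ n dims) :
    tupNorm (r • U) = |r| * tupNorm U := by
  simp only [tupNorm_eq, map_smul, norm_smul, Real.norm_eq_abs]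

lemma tupNorm_eq_zero {U : XTup L₀ n dims} (h : tupNorm U = 0) : U = 0 := by
  rw [tupNorm_eq, norm_eq_zero] at h
  have := congrArg tupEquiv.symm h
  simpa using this

lemma tupNorm_sq (U : XTup L₀ n dims) :
    tupNorm U ^ 2 = ∑ ℓ, matFrobNorm (U ℓ) ^ 2 := by
  rw [tupNorm, Real.sq_sqrt (by positivity)]
  refine Finset.sum_congr rfl fun ℓ _ => ?_
  rw [matFrobNorm, Real.sq_sqrt (by positivity)]

lemma matFrobNorm_continuous : Continuous (matFrobNorm : (Fin a → Fin b → ℝ) → ℝ) := by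
  have : (matFrobNorm : (Fin a → Fin b → ℝ) → ℝ) = fun M => ‖matEquiv M‖ := by
    funext M; exact matFrobNorm_eq M
  rw [this]
  exact continuous_norm.comp matEquiv.toLinearMap.continuous_of_finiteDimensional

lemma sphere_isCompact : IsCompact {U : XTup L₀ n dims | tupNorm U = 1} := by
  have h1 : {U : XTup L₀ n dims | tupNorm U = 1}
      = tupEquiv.symm '' (Metric.sphere 0 1) := by
    ext U
    constructor
    · intro hU
      exact ⟨tupEquiv U, by simpa [mem_sphere_zero_iff_norm, ← tupNorm_eq] using hU, by simp⟩
    · rintro ⟨x, hx, rfl⟩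
      simp only [Set.mem_setOf_eq, tupNorm_eq, LinearEquiv.apply_symm_apply]
      simpa [mem_sphere_zero_iff_norm] using hx
  rw [h1]
  exact (isCompact_sphere 0 1).image
    tupEquiv.symm.toLinearMap.continuous_of_finiteDimensional

/-- Generic homogeneous sSup bound. -/
lemma sSup_homog_bound (g : XTup L₀ n dims → ℝ) (hg : Continuous g)
    (hg0 : ∀ U, 0 ≤ g U) (k : ℕ) (hk : k ≠ 0)
    (hgs : ∀ (r : ℝ), 0 ≤ r → ∀ U, g (r • U) = r ^ k * g U) :
    0 ≤ sSup (g '' {U | tupNorm U = 1}) ∧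
      ∀ U, g U ≤ sSup (g '' {U | tupNorm U = 1}) * tupNorm U ^ k := by
  set K := sSup (g '' {U | tupNorm U = 1}) with hK
  have hbdd : BddAbove (g '' {U : XTup L₀ n dims | tupNorm U = 1}) :=
    (sphere_isCompact.image hg).bddAbove
  have hle : ∀ U, tupNorm U = 1 → g U ≤ K := fun U hU =>
    le_csSup hbdd ⟨U, hU, rfl⟩
  have hK0 : 0 ≤ K := by
    rcases Set.eq_empty_or_nonempty {U : XTup L₀ n dims | tupNorm U = 1} with h | ⟨U, hU⟩
    · rw [hK, h]; simp [Real.sSup_empty]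
    · exact le_trans (hg0 U) (hle U hU)
  refine ⟨hK0, fun U => ?_⟩
  rcases eq_or_lt_of_le (tupNorm_nonneg U) with h0 | hpos
  · have hU0 : U = 0 := tupNorm_eq_zero h0.symm
    have hgU : g U = 0 := by
      have := hgs 0 le_rfl U
      simpa [hU0, hk] using this
    rw [hgU, ← h0]
    simp [zero_pow hk]
  · set r := tupNorm U with hr
    have hV : tupNorm (r⁻¹ • U) = 1 := by
      rw [tupNorm_smul, abs_of_nonneg (by positivity), ← hr]
      field_simp
    have hgs' := hgs r hpos.le (r⁻¹ • U)
    rw [smul_smul, mul_inv_cancel₀ (ne_of_gt hpos), one_smul] at hgs'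
    rw [hgs']
    calc r ^ k * g (r⁻¹ • U) ≤ r ^ k * K :=
          mul_le_mul_of_nonneg_left (hle _ hV) (by positivity)
      _ = K * tupNorm U ^ k := by ring

/-- Frobenius norm of a matrix product bounded by operator norm times Frobenius norm. -/
lemma frob_mul_le {a b c : ℕ} (M : Fin a → Fin b → ℝ) (B : Fin b → Fin c → ℝ) :
    matFrobNorm (fun i q => ∑ j, M i j * B j q) ≤ opNormM (Matrix.of M) * matFrobNorm B := by
  set T := LinearMap.toContinuousLinearMap (Matrix.toEuclideanLin (Matrix.of M)) with hT
  have happ : ∀ (x : EuclideanSpace ℝ (Fin b)) (i : Fin a), T x i = ∑ j, M i j * x j := by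
    intro x i
    rfl
  have key : ∀ q : Fin c, ∑ i, (∑ j, M i j * B j q) ^ 2
      ≤ (opNormM (Matrix.of M)) ^ 2 * ∑ j, (B j q) ^ 2 := by
    intro q
    set x : EuclideanSpace ℝ (Fin b) := WithLp.toLp 2 (fun j => B j q) with hx
    have h1 : ∑ i, (∑ j, M i j * B j q) ^ 2 = ‖T x‖ ^ 2 := by
      rw [EuclideanSpace.norm_eq, Real.sq_sqrt (by positivity)]
      refine Finset.sum_congr rfl fun i _ => ?_
      rw [Real.norm_eq_abs, sq_abs, happ]
    have h2 : ‖x‖ ^ 2 = ∑ j, (B j q) ^ 2 := by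
      rw [EuclideanSpace.norm_eq, Real.sq_sqrt (by positivity)]
      exact Finset.sum_congr rfl fun j _ => by rw [Real.norm_eq_abs, sq_abs]
    rw [h1, ← h2]
    calc ‖T x‖ ^ 2 ≤ (‖T‖ * ‖x‖) ^ 2 :=
          pow_le_pow_left₀ (norm_nonneg _) (T.le_opNorm x) 2
      _ = opNormM (Matrix.of M) ^ 2 * ‖x‖ ^ 2 := by rw [mul_pow]; rfl
  rw [matFrobNorm, matFrobNorm]
  rw [show (∑ i, ∑ q, (∑ j, M i j * B j q) ^ 2) = ∑ q, ∑ i, (∑ j, M i j * B j q) ^ 2 from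
    Finset.sum_comm]
  rw [show (∑ j, ∑ q, (B j q) ^ 2) = ∑ q, ∑ j, (B j q) ^ 2 from Finset.sum_comm]
  have hsum : ∑ q, ∑ i, (∑ j, M i j * B j q) ^ 2
      ≤ opNormM (Matrix.of M) ^ 2 * ∑ q, ∑ j, (B j q) ^ 2 := by
    rw [Finset.mul_sum]
    exact Finset.sum_le_sum fun q _ => key q
  calc Real.sqrt (∑ q, ∑ i, (∑ j, M i j * B j q) ^ 2)
      ≤ Real.sqrt (opNormM (Matrix.of M) ^ 2 * ∑ q, ∑ j, (B j q) ^ 2) :=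
        Real.sqrt_le_sqrt hsum
    _ = opNormM (Matrix.of M) * Real.sqrt (∑ q, ∑ j, (B j q) ^ 2) := by
        rw [Real.sqrt_mul (by positivity), Real.sqrt_sq (by unfold opNormM; positivity)]

end basic

lemma hasDerivAt_eval_pi {ι : Type*} [Fintype ι] {E : ι → Type*}
    [∀ i, NormedAddCommGroup (E i)] [∀ i, NormedSpace ℝ (E i)]
    {g : ℝ → ∀ i, E i} {G : ∀ i, E i} {t : ℝ} (h : HasDerivAt g G t) (i : ι) :
    HasDerivAt (fun s => g s i) (G i) t := by
  have := (ContinuousLinearMap.proj (R := ℝ) (φ := E) i).hasFDerivAt.comp_hasDerivAt t h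
  exact this

lemma sum_sq_le_sq_sum {ι : Type*} {s : Finset ι} {f : ι → ℝ} (h : ∀ i ∈ s, 0 ≤ f i) :
    ∑ i ∈ s, f i ^ 2 ≤ (∑ i ∈ s, f i) ^ 2 := by
  rw [sq (∑ i ∈ s, f i), Finset.sum_mul]
  refine Finset.sum_le_sum fun i hi => ?_
  rw [sq]
  exact mul_le_mul_of_nonneg_left (Finset.single_le_sum h hi) (h i hi)

lemma diff_deriv_of_contDiff2 {E : Type*} [NormedAddCommGroup E] [NormedSpace ℝ E]
    {g : ℝ → E} (h : ContDiff ℝ 2 g) : Differentiable ℝ (deriv g) := by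
  have e : ((1 : WithTop ℕ∞) + 1) = 2 := by norm_num
  rw [← e] at h
  exact (contDiff_succ_iff_deriv.mp h).2.2.differentiable (by norm_num)
set_option maxHeartbeats 4000000 in
/-- Layerwise Hessian bound: for the layered model
`X_ℓ(W) = W_ℓ A_{ℓ−1}(W)`, `A_ℓ(W) = Φ_ℓ(X_1(W),…,X_ℓ(W))`, `𝓛(W) = f(X_1(W),…,X_L(W))`, the
Hessian quadratic form of `𝓛` at a fixed `W` satisfies
`|⟨ΔW, ∇²𝓛(W)·ΔW⟩| ≤ C_F·Σ_ℓ ‖ΔW_ℓ A_{ℓ−1}(W)‖_F² + C_op·Σ_ℓ ‖ΔW_ℓ‖_op²`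
with `C_F = Γ²H_f + J_f Θ W_* H_Φ Γ² L + J_f² Θ Γ² L` and `C_op = Θ J_Φ²`, where the numbers
of layers is `L = L₀ + 1`, `Γ = √2(1+2J_Φ²W_*²)^{L/2}` and `Θ = (1+J_Φ W_*)^{L−1}`. -/
theorem layered_hessian_bound
    (L₀ n : ℕ) (dims : Fin (L₀ + 2) → ℕ)
    (A₀ : Fin (dims 0) → Fin n → ℝ)
    (Φ : (ℓ : Fin (L₀ + 1)) → XTup L₀ n dims → (Fin (dims ℓ.succ) → Fin n → ℝ))
    (hΦdep : ∀ (ℓ : Fin (L₀ + 1)) (x y : XTup L₀ n dims),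
      (∀ i : Fin (L₀ + 1), i ≤ ℓ → x i = y i) → Φ ℓ x = Φ ℓ y)
    (hΦsmooth : ∀ ℓ, ContDiff ℝ 2 (Φ ℓ))
    (f : XTup L₀ n dims → ℝ) (hf : ContDiff ℝ 2 f)
    (Xfun : WTup L₀ dims → XTup L₀ n dims)
    (Afun : WTup L₀ dims → ∀ ℓ : Fin (L₀ + 2), Fin (dims ℓ) → Fin n → ℝ)
    (hA0 : ∀ w, Afun w 0 = A₀)
    (hXdef : ∀ w (ℓ : Fin (L₀ + 1)) i t,
      Xfun w ℓ i t = ∑ j, w ℓ i j * Afun w ℓ.castSucc j t)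
    (hAdef : ∀ w (ℓ : Fin (L₀ + 1)), Afun w ℓ.succ = Φ ℓ (Xfun w))
    (lossL : WTup L₀ dims → ℝ)
    (hloss : ∀ w, lossL w = f (Xfun w))
    (W : WTup L₀ dims)
    (JΦ HΦ : Fin (L₀ + 1) → ℝ)
    (hJΦ : ∀ ℓ, JΦ ℓ = sSup ((fun U : XTup L₀ n dims =>
      matFrobNorm (fderiv ℝ (Φ ℓ) (Xfun W) U)) '' {U | tupNorm U = 1}))
    (hHΦ : ∀ ℓ, HΦ ℓ = sSup ((fun U : XTup L₀ n dims =>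
      matFrobNorm ((fderiv ℝ (fderiv ℝ (Φ ℓ)) (Xfun W) U) U)) '' {U | tupNorm U = 1}))
    (Jf Hf JΦm HΦm Wstar Γ Θ CF Cop : ℝ)
    (hJf : Jf = sSup ((fun U : XTup L₀ n dims =>
      |fderiv ℝ f (Xfun W) U|) '' {U | tupNorm U = 1}))
    (hHf : Hf = sSup ((fun U : XTup L₀ n dims =>
      |(fderiv ℝ (fderiv ℝ f) (Xfun W) U) U|) '' {U | tupNorm U = 1}))
    (hJΦm : JΦm = ⨆ ℓ, JΦ ℓ)
    (hHΦm : HΦm = ⨆ ℓ, HΦ ℓ)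
    (hWstar : Wstar = ⨆ ℓ, opNormM (Matrix.of (W ℓ)))
    (hΓ : Γ = Real.sqrt 2 * (1 + 2 * JΦm ^ 2 * Wstar ^ 2) ^ (((L₀ : ℝ) + 1) / 2))
    (hΘ : Θ = (1 + JΦm * Wstar) ^ L₀)
    (hCF : CF = Γ ^ 2 * Hf + Jf * Θ * Wstar * HΦm * Γ ^ 2 * ((L₀ : ℝ) + 1)
      + Jf ^ 2 * Θ * Γ ^ 2 * ((L₀ : ℝ) + 1))
    (hCop : Cop = Θ * JΦm ^ 2) :
    ∀ ΔW : WTup L₀ dims,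
      |(fderiv ℝ (fderiv ℝ lossL) W ΔW) ΔW| ≤
        CF * (∑ ℓ : Fin (L₀ + 1), ∑ i, ∑ t,
            (∑ j, ΔW ℓ i j * Afun W ℓ.castSucc j t) ^ 2)
          + Cop * ∑ ℓ : Fin (L₀ + 1), (opNormM (Matrix.of (ΔW ℓ))) ^ 2 := by

  -- ### Smoothness of the network maps
  have hXof : ∀ k : Fin (L₀ + 1), ContDiff ℝ 2 (fun w => Afun w k.castSucc) →
      ContDiff ℝ 2 (fun w => Xfun w k) := by
    intro k hA
    have hfun : (fun w => Xfun w k)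
        = fun w => (fun i t => ∑ j, w k i j * Afun w k.castSucc j t) := by
      funext w; funext i t; exact hXdef w k i t
    rw [hfun]
    refine contDiff_pi.2 fun i => contDiff_pi.2 fun t => ContDiff.sum fun j _ => ?_
    exact ContDiff.mul
      (contDiff_pi.1 (contDiff_pi.1 (contDiff_pi.1 contDiff_id k) i) j)
      (contDiff_pi.1 (contDiff_pi.1 hA j) t)
  have hAsm : ∀ m : ℕ, ∀ ℓ : Fin (L₀ + 2), ℓ.val ≤ m → ContDiff ℝ 2 (fun w => Afun w ℓ) := by
    intro m
    induction m with
    | zero =>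
      intro ℓ hℓ
      have hℓ0 : ℓ = 0 := by apply Fin.ext; simp only [Fin.val_zero]; omega
      subst hℓ0
      have : (fun w => Afun w 0) = fun _ => A₀ := funext hA0
      rw [this]; exact contDiff_const
    | succ m ih =>
      intro ℓ hℓ
      rcases Nat.lt_or_ge ℓ.val (m + 1) with h | h
      · exact ih ℓ (by omega)
      · have hval : ℓ.val = m + 1 := by omega
        have hm : m < L₀ + 1 := by omega
        set ℓ' : Fin (L₀ + 1) := ⟨m, hm⟩ with hℓ'
        have hsucc : ℓ = ℓ'.succ := by apply Fin.ext; simp [hℓ', hval]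
        subst hsucc
        have key : (fun w => Afun w ℓ'.succ)
            = fun w => Φ ℓ' (fun k => if k ≤ ℓ' then Xfun w k else 0) := by
          funext w
          rw [hAdef w ℓ']
          exact hΦdep ℓ' _ _ (fun i hi => by simp [hi])
        rw [key]
        refine (hΦsmooth ℓ').comp (contDiff_pi.2 fun k => ?_)
        by_cases hk : k ≤ ℓ'
        · simp only [if_pos hk]
          refine hXof k (ih k.castSucc ?_)
          have : k.val ≤ m := hk
          simpa using this
        · simp only [if_neg hk]
          exact contDiff_const
  have hXsm : ContDiff ℝ 2 Xfun :=
    contDiff_pi.2 fun k => hXof k (hAsm (L₀ + 2) k.castSucc (by omega))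
  have hlossEq : lossL = fun w => f (Xfun w) := funext hloss
  have hlosssm : ContDiff ℝ 2 lossL := by rw [hlossEq]; exact hf.comp hXsm
  intro ΔW
  -- ### The curve through W in direction ΔW
  set c : ℝ → WTup L₀ dims := fun t => W + t • ΔW with hcdef
  have hc0 : c 0 = W := by simp [hcdef]
  have hcD : ∀ t, HasDerivAt c ΔW t := by
    intro t
    have h1 : HasDerivAt (fun s : ℝ => s • ΔW) ((1:ℝ) • ΔW) t := (hasDerivAt_id t).smul_const ΔW
    simpa [hcdef] using h1.const_add W
  have hcsm : ContDiff ℝ 2 c := by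
    rw [hcdef]; exact contDiff_const.add (contDiff_id.smul contDiff_const)
  set x : ℝ → XTup L₀ n dims := fun t => Xfun (c t) with hxdef
  have hxsm : ContDiff ℝ 2 x := hXsm.comp hcsm
  have hxdiff : Differentiable ℝ x := hxsm.differentiable (by norm_num)
  have hx0 : x 0 = Xfun W := by rw [hxdef]; simp only [hc0]
  set aC : (κ : Fin (L₀ + 2)) → ℝ → (Fin (dims κ) → Fin n → ℝ) :=
    fun κ t => Afun (c t) κ with haCdef
  have haCsm : ∀ κ, ContDiff ℝ 2 (aC κ) := fun κ => (hAsm (L₀ + 2) κ (by omega)).comp hcsm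
  have haC0 : ∀ κ, aC κ 0 = Afun W κ := fun κ => by rw [haCdef]; simp only [hc0]
  set Dx : ℝ → XTup L₀ n dims := deriv x with hDxdef
  set Da : (κ : Fin (L₀ + 2)) → ℝ → (Fin (dims κ) → Fin n → ℝ) :=
    fun κ => deriv (aC κ) with hDadef
  have hxHas : ∀ t, HasDerivAt x (Dx t) t := fun t => (hxdiff t).hasDerivAt
  have haHas : ∀ κ t, HasDerivAt (aC κ) (Da κ t) t := fun κ t =>
    (((haCsm κ).differentiable (by norm_num)) t).hasDerivAt
  have hDx_diff : Differentiable ℝ Dx := diff_deriv_of_contDiff2 hxsm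
  have hDa_diff : ∀ κ, Differentiable ℝ (Da κ) := fun κ => diff_deriv_of_contDiff2 (haCsm κ)
  -- ### First derivative formulas
  have hDa0 : ∀ t, Da 0 t = 0 := by
    intro t
    have h1 : aC 0 = fun _ => A₀ := funext fun s => hA0 (c s)
    show deriv (aC 0) t = 0
    rw [h1]
    simp
  have hDxf : ∀ t (ℓ : Fin (L₀ + 1)), Dx t ℓ = fun i q =>
      ∑ j, (ΔW ℓ i j * aC ℓ.castSucc t j q + c t ℓ i j * Da ℓ.castSucc t j q) := by
    intro t ℓ
    funext i q
    have h1 : HasDerivAt (fun s => x s ℓ i q) (Dx t ℓ i q) t :=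
      hasDerivAt_eval_pi (hasDerivAt_eval_pi (hasDerivAt_eval_pi (hxHas t) ℓ) i) q
    have h2 : HasDerivAt (fun s => x s ℓ i q)
        (∑ j, (ΔW ℓ i j * aC ℓ.castSucc t j q + c t ℓ i j * Da ℓ.castSucc t j q)) t := by
      have hfun : (fun s => x s ℓ i q) = fun s => ∑ j, c s ℓ i j * aC ℓ.castSucc s j q := by
        funext s; exact hXdef (c s) ℓ i q
      rw [hfun]
      refine HasDerivAt.fun_sum fun j _ => ?_
      exact (hasDerivAt_eval_pi (hasDerivAt_eval_pi (hasDerivAt_eval_pi (hcD t) ℓ) i) j).mul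
        (hasDerivAt_eval_pi (hasDerivAt_eval_pi (haHas ℓ.castSucc t) j) q)
    exact h1.unique h2
  have hDasucc : ∀ (ℓ : Fin (L₀ + 1)) t, Da ℓ.succ t = fderiv ℝ (Φ ℓ) (x t) (Dx t) := by
    intro ℓ t
    have h1 : HasDerivAt (aC ℓ.succ) (Da ℓ.succ t) t := haHas _ t
    have h2 : HasDerivAt (aC ℓ.succ) (fderiv ℝ (Φ ℓ) (x t) (Dx t)) t := by
      have hfun : aC ℓ.succ = fun s => Φ ℓ (x s) := funext fun s => hAdef (c s) ℓ
      rw [hfun]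
      exact (((hΦsmooth ℓ).differentiable (by norm_num) (x t)).hasFDerivAt).comp_hasDerivAt
        t (hxHas t)
    exact h1.unique h2

  -- ### Second-derivative formulas at 0
  have hDDa0 : deriv (Da 0) 0 = 0 := by
    have h1 : Da 0 = fun _ => (0 : Fin (dims 0) → Fin n → ℝ) := funext fun t => hDa0 t
    rw [h1]; simp
  have huf : ∀ (ℓ : Fin (L₀ + 1)), deriv Dx 0 ℓ = fun i q =>
      ∑ j, (2 * (ΔW ℓ i j * Da ℓ.castSucc 0 j q)
        + W ℓ i j * deriv (Da ℓ.castSucc) 0 j q) := by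
    intro ℓ
    funext i q
    have h1 : HasDerivAt (fun s => Dx s ℓ i q) (deriv Dx 0 ℓ i q) 0 :=
      hasDerivAt_eval_pi (hasDerivAt_eval_pi (hasDerivAt_eval_pi ((hDx_diff 0).hasDerivAt) ℓ) i) q
    have h2 : HasDerivAt (fun s => Dx s ℓ i q)
        (∑ j, (ΔW ℓ i j * Da ℓ.castSucc 0 j q +
          (ΔW ℓ i j * Da ℓ.castSucc 0 j q + W ℓ i j * deriv (Da ℓ.castSucc) 0 j q))) 0 := by
      have hfun : (fun s => Dx s ℓ i q)
          = fun s => ∑ j, (ΔW ℓ i j * aC ℓ.castSucc s j q + c s ℓ i j * Da ℓ.castSucc s j q) := by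
        funext s
        rw [congrFun (congrFun (hDxf s ℓ) i) q]
      rw [hfun]
      refine HasDerivAt.fun_sum fun j _ => ?_
      have ha : HasDerivAt (fun s => ΔW ℓ i j * aC ℓ.castSucc s j q)
          (ΔW ℓ i j * Da ℓ.castSucc 0 j q) 0 :=
        (hasDerivAt_eval_pi (hasDerivAt_eval_pi (haHas ℓ.castSucc 0) j) q).const_mul (ΔW ℓ i j)
      have hb : HasDerivAt (fun s => c s ℓ i j * Da ℓ.castSucc s j q)
          (ΔW ℓ i j * Da ℓ.castSucc 0 j q + W ℓ i j * deriv (Da ℓ.castSucc) 0 j q) 0 := by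
        have h := (hasDerivAt_eval_pi (hasDerivAt_eval_pi (hasDerivAt_eval_pi (hcD 0) ℓ) i) j).fun_mul
          (hasDerivAt_eval_pi (hasDerivAt_eval_pi ((hDa_diff ℓ.castSucc 0).hasDerivAt) j) q)
        simpa only [hc0] using h
      exact ha.add hb
    have h3 := h1.unique h2
    rw [h3]
    exact Finset.sum_congr rfl fun j _ => by ring
  have hDDasucc : ∀ (ℓ : Fin (L₀ + 1)), deriv (Da ℓ.succ) 0 =
      (fderiv ℝ (fderiv ℝ (Φ ℓ)) (Xfun W) (Dx 0)) (Dx 0)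
        + fderiv ℝ (Φ ℓ) (Xfun W) (deriv Dx 0) := by
    intro ℓ
    have h1 : HasDerivAt (Da ℓ.succ) (deriv (Da ℓ.succ) 0) 0 := (hDa_diff _ 0).hasDerivAt
    have hΦ1 : Differentiable ℝ (fderiv ℝ (Φ ℓ)) :=
      ((hΦsmooth ℓ).fderiv_right (m := 1) (by norm_num)).differentiable (by norm_num)
    have hG : HasDerivAt (fun s => fderiv ℝ (Φ ℓ) (x s))
        (fderiv ℝ (fderiv ℝ (Φ ℓ)) (x 0) (Dx 0)) 0 :=
      (hΦ1 (x 0)).hasFDerivAt.comp_hasDerivAt 0 (hxHas 0)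
    have h2 : HasDerivAt (Da ℓ.succ)
        ((fderiv ℝ (fderiv ℝ (Φ ℓ)) (x 0) (Dx 0)) (Dx 0)
          + fderiv ℝ (Φ ℓ) (x 0) (deriv Dx 0)) 0 := by
      have hfun : Da ℓ.succ = fun s => (fderiv ℝ (Φ ℓ) (x s)) (Dx s) :=
        funext fun s => hDasucc ℓ s
      rw [hfun]
      exact hG.clm_apply ((hDx_diff 0).hasDerivAt)
    have h3 := h1.unique h2
    rwa [hx0] at h3
  -- ### The Hessian quadratic form via the curve
  have hstep1 : ∀ t, HasDerivAt (fun s => lossL (c s)) ((fderiv ℝ lossL (c t)) ΔW) t := fun t =>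
    ((hlosssm.differentiable (by norm_num) (c t)).hasFDerivAt).comp_hasDerivAt t (hcD t)
  have hstep1' : ∀ t, HasDerivAt (fun s => lossL (c s)) ((fderiv ℝ f (x t)) (Dx t)) t := by
    intro t
    have hfun : (fun s => lossL (c s)) = fun s => f (x s) := funext fun s => hloss (c s)
    rw [hfun]
    exact ((hf.differentiable (by norm_num) (x t)).hasFDerivAt).comp_hasDerivAt t (hxHas t)
  have heq1 : (fun t => (fderiv ℝ lossL (c t)) ΔW) = fun t => (fderiv ℝ f (x t)) (Dx t) :=
    funext fun t => (hstep1 t).unique (hstep1' t)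
  have hL1 : Differentiable ℝ (fderiv ℝ lossL) :=
    (hlosssm.fderiv_right (m := 1) (by norm_num)).differentiable (by norm_num)
  have hG2 : HasDerivAt (fun t => fderiv ℝ lossL (c t)) (fderiv ℝ (fderiv ℝ lossL) W ΔW) 0 := by
    have h := (hL1 (c 0)).hasFDerivAt.comp_hasDerivAt 0 (hcD 0)
    rwa [hc0] at h
  have hstep2 : HasDerivAt (fun t => (fderiv ℝ lossL (c t)) ΔW)
      ((fderiv ℝ (fderiv ℝ lossL) W ΔW) ΔW) 0 := by
    have h := hG2.clm_apply (hasDerivAt_const 0 ΔW)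
    simpa using h
  have hf1 : Differentiable ℝ (fderiv ℝ f) :=
    (hf.fderiv_right (m := 1) (by norm_num)).differentiable (by norm_num)
  have hGf : HasDerivAt (fun t => fderiv ℝ f (x t))
      (fderiv ℝ (fderiv ℝ f) (Xfun W) (Dx 0)) 0 := by
    have h := (hf1 (x 0)).hasFDerivAt.comp_hasDerivAt 0 (hxHas 0)
    rwa [hx0] at h
  have hstep2' : HasDerivAt (fun t => (fderiv ℝ f (x t)) (Dx t))
      ((fderiv ℝ (fderiv ℝ f) (Xfun W) (Dx 0)) (Dx 0)
        + fderiv ℝ f (Xfun W) (deriv Dx 0)) 0 := by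
    have h := hGf.clm_apply ((hDx_diff 0).hasDerivAt)
    rwa [hx0] at h
  have hmain : (fderiv ℝ (fderiv ℝ lossL) W ΔW) ΔW
      = (fderiv ℝ (fderiv ℝ f) (Xfun W) (Dx 0)) (Dx 0)
        + fderiv ℝ f (Xfun W) (deriv Dx 0) := by
    have h2 : HasDerivAt (fun t => (fderiv ℝ f (x t)) (Dx t))
        ((fderiv ℝ (fderiv ℝ lossL) W ΔW) ΔW) 0 := heq1 ▸ hstep2
    exact h2.unique hstep2'
  -- ### Truncation: the derivative of Φ ℓ only sees components ≤ ℓ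
  have htrunc0 : ∀ (ℓ : Fin (L₀ + 1)) (U : XTup L₀ n dims),
      (∀ i, i ≤ ℓ → U i = 0) → fderiv ℝ (Φ ℓ) (Xfun W) U = 0 := by
    intro ℓ U hU
    have hconst : (fun t : ℝ => Φ ℓ (Xfun W + t • U)) = fun _ => Φ ℓ (Xfun W) := by
      funext t
      refine hΦdep ℓ _ _ fun i hi => ?_
      show Xfun W i + t • U i = Xfun W i
      rw [hU i hi]
      simp
    have hcur : HasDerivAt (fun t : ℝ => Xfun W + t • U) U 0 := by
      have h1 : HasDerivAt (fun s : ℝ => s • U) ((1:ℝ) • U) 0 := (hasDerivAt_id 0).smul_const U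
      simpa using h1.const_add (Xfun W)
    have hΦd : HasFDerivAt (Φ ℓ) (fderiv ℝ (Φ ℓ) (Xfun W)) (Xfun W + (0:ℝ) • U) := by
      simpa using ((hΦsmooth ℓ).differentiable (by norm_num) (Xfun W)).hasFDerivAt
    have h1 : HasDerivAt (fun t : ℝ => Φ ℓ (Xfun W + t • U)) (fderiv ℝ (Φ ℓ) (Xfun W) U) 0 :=
      hΦd.comp_hasDerivAt 0 hcur
    have h2 : HasDerivAt (fun t : ℝ => Φ ℓ (Xfun W + t • U)) 0 0 := by
      rw [hconst]; exact hasDerivAt_const _ _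
    exact h1.unique h2
  have htruncEq : ∀ (ℓ : Fin (L₀ + 1)) (U : XTup L₀ n dims),
      fderiv ℝ (Φ ℓ) (Xfun W) U
        = fderiv ℝ (Φ ℓ) (Xfun W) (fun i => if i ≤ ℓ then U i else 0) := by
    intro ℓ U
    have hzero : fderiv ℝ (Φ ℓ) (Xfun W) (U - fun i => if i ≤ ℓ then U i else 0) = 0 := by
      refine htrunc0 ℓ _ fun i hi => ?_
      show U i - (if i ≤ ℓ then U i else 0) = 0
      rw [if_pos hi, sub_self]
    have h := (fderiv ℝ (Φ ℓ) (Xfun W)).map_sub U (fun i => if i ≤ ℓ then U i else 0)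
    rw [hzero] at h
    exact (sub_eq_zero.mp h.symm)

  -- ### Quantitative bounds from the sSup definitions
  have hJΦb : ∀ ℓ, 0 ≤ JΦ ℓ ∧ ∀ U, matFrobNorm (fderiv ℝ (Φ ℓ) (Xfun W) U) ≤ JΦ ℓ * tupNorm U := by
    intro ℓ
    have h := sSup_homog_bound (fun U => matFrobNorm (fderiv ℝ (Φ ℓ) (Xfun W) U))
      (matFrobNorm_continuous.comp (fderiv ℝ (Φ ℓ) (Xfun W)).continuous)
      (fun U => matFrobNorm_nonneg _) 1 one_ne_zero ?_
    · rw [← hJΦ ℓ] at h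
      exact ⟨h.1, fun U => by simpa [pow_one] using h.2 U⟩
    · intro r hr U
      rw [map_smul, matFrobNorm_smul, abs_of_nonneg hr, pow_one]
  have hHΦb : ∀ ℓ, 0 ≤ HΦ ℓ ∧ ∀ U,
      matFrobNorm ((fderiv ℝ (fderiv ℝ (Φ ℓ)) (Xfun W) U) U) ≤ HΦ ℓ * tupNorm U ^ 2 := by
    intro ℓ
    have h := sSup_homog_bound (fun U => matFrobNorm ((fderiv ℝ (fderiv ℝ (Φ ℓ)) (Xfun W) U) U))
      (matFrobNorm_continuous.comp
        ((fderiv ℝ (fderiv ℝ (Φ ℓ)) (Xfun W)).continuous.clm_apply continuous_id))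
      (fun U => matFrobNorm_nonneg _) 2 two_ne_zero ?_
    · rw [← hHΦ ℓ] at h
      exact ⟨h.1, h.2⟩
    · intro r hr U
      have hq : (fderiv ℝ (fderiv ℝ (Φ ℓ)) (Xfun W) (r • U)) (r • U)
          = (r * r) • ((fderiv ℝ (fderiv ℝ (Φ ℓ)) (Xfun W) U) U) := by
        simp only [map_smul, ContinuousLinearMap.smul_apply, smul_smul]
      rw [hq, matFrobNorm_smul, abs_of_nonneg (mul_nonneg hr hr), pow_two]
  have hJfb : 0 ≤ Jf ∧ ∀ U, |fderiv ℝ f (Xfun W) U| ≤ Jf * tupNorm U := by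
    have h := sSup_homog_bound (fun U => |fderiv ℝ f (Xfun W) U|)
      ((fderiv ℝ f (Xfun W)).continuous.abs)
      (fun U => abs_nonneg _) 1 one_ne_zero ?_
    · rw [← hJf] at h
      exact ⟨h.1, fun U => by simpa [pow_one] using h.2 U⟩
    · intro r hr U
      rw [map_smul, smul_eq_mul, abs_mul, abs_of_nonneg hr, pow_one]
  have hHfb : 0 ≤ Hf ∧ ∀ U, |(fderiv ℝ (fderiv ℝ f) (Xfun W) U) U| ≤ Hf * tupNorm U ^ 2 := by
    have h := sSup_homog_bound (fun U => |(fderiv ℝ (fderiv ℝ f) (Xfun W) U) U|)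
      (((fderiv ℝ (fderiv ℝ f) (Xfun W)).continuous.clm_apply continuous_id).abs)
      (fun U => abs_nonneg _) 2 two_ne_zero ?_
    · rw [← hHf] at h
      exact ⟨h.1, h.2⟩
    · intro r hr U
      have hq : (fderiv ℝ (fderiv ℝ f) (Xfun W) (r • U)) (r • U)
          = (r * r) • ((fderiv ℝ (fderiv ℝ f) (Xfun W) U) U) := by
        simp only [map_smul, ContinuousLinearMap.smul_apply, smul_smul]
      rw [hq, smul_eq_mul, abs_mul, abs_of_nonneg (mul_nonneg hr hr), pow_two]
  have hJm : ∀ ℓ, JΦ ℓ ≤ JΦm := by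
    intro ℓ; rw [hJΦm]
    exact le_ciSup (Set.Finite.bddAbove (Set.finite_range _)) ℓ
  have hJm0 : 0 ≤ JΦm := le_trans (hJΦb 0).1 (hJm 0)
  have hHm : ∀ ℓ, HΦ ℓ ≤ HΦm := by
    intro ℓ; rw [hHΦm]
    exact le_ciSup (Set.Finite.bddAbove (Set.finite_range _)) ℓ
  have hHm0 : 0 ≤ HΦm := le_trans (hHΦb 0).1 (hHm 0)
  have hWl : ∀ ℓ, opNormM (Matrix.of (W ℓ)) ≤ Wstar := by
    intro ℓ; rw [hWstar]
    exact le_ciSup (f := fun ℓ => opNormM (Matrix.of (W ℓ)))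
      (Set.Finite.bddAbove (Set.finite_range _)) ℓ
  have hW0 : 0 ≤ Wstar := le_trans (norm_nonneg _) (hWl 0)
  have hJb : ∀ ℓ U, matFrobNorm (fderiv ℝ (Φ ℓ) (Xfun W) U) ≤ JΦm * tupNorm U := fun ℓ U =>
    le_trans ((hJΦb ℓ).2 U) (mul_le_mul_of_nonneg_right (hJm ℓ) (tupNorm_nonneg U))
  have hHb : ∀ ℓ U, matFrobNorm ((fderiv ℝ (fderiv ℝ (Φ ℓ)) (Xfun W) U) U)
      ≤ HΦm * tupNorm U ^ 2 := fun ℓ U =>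
    le_trans ((hHΦb ℓ).2 U) (mul_le_mul_of_nonneg_right (hHm ℓ) (by positivity))
  -- ### Scalar quantities
  set v : XTup L₀ n dims := Dx 0 with hvdef
  set u : XTup L₀ n dims := deriv Dx 0 with hudef
  set σ : ℝ := tupNorm v with hσdef
  set α : Fin (L₀ + 1) → ℝ :=
    fun ℓ => matFrobNorm (fun i q => ∑ j, ΔW ℓ i j * Afun W ℓ.castSucc j q) with hαdef
  set β : Fin (L₀ + 1) → ℝ := fun ℓ => opNormM (Matrix.of (ΔW ℓ)) with hβdef
  set p : Fin (L₀ + 1) → ℝ := fun ℓ => matFrobNorm (v ℓ) with hpdef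
  set d : Fin (L₀ + 2) → ℝ := fun κ => matFrobNorm (Da κ 0) with hddef
  set qn : Fin (L₀ + 1) → ℝ := fun ℓ => matFrobNorm (u ℓ) with hqdef
  set e : Fin (L₀ + 2) → ℝ := fun κ => matFrobNorm (deriv (Da κ) 0) with hedef
  have hσ0 : 0 ≤ σ := tupNorm_nonneg v
  have hα0 : ∀ ℓ, 0 ≤ α ℓ := fun ℓ => matFrobNorm_nonneg _
  have hβ0 : ∀ ℓ, 0 ≤ β ℓ := fun ℓ => norm_nonneg _
  have hp0 : ∀ ℓ, 0 ≤ p ℓ := fun ℓ => matFrobNorm_nonneg _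
  have hd0' : ∀ κ, 0 ≤ d κ := fun κ => matFrobNorm_nonneg _
  have hq0 : ∀ ℓ, 0 ≤ qn ℓ := fun ℓ => matFrobNorm_nonneg _
  have he0 : ∀ κ, 0 ≤ e κ := fun κ => matFrobNorm_nonneg _
  -- ### First-order recursion
  have hvdec : ∀ ℓ, p ℓ ≤ α ℓ + Wstar * d ℓ.castSucc := by
    intro ℓ
    have hveq : v ℓ = (fun i q => ∑ j, ΔW ℓ i j * Afun W ℓ.castSucc j q)
        + (fun i q => ∑ j, W ℓ i j * Da ℓ.castSucc 0 j q) := by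
      rw [hvdef, hDxf 0 ℓ]
      funext i q
      show (∑ j, (ΔW ℓ i j * aC ℓ.castSucc 0 j q + c 0 ℓ i j * Da ℓ.castSucc 0 j q)) = _
      simp only [hc0, haC0, Pi.add_apply]
      rw [Finset.sum_add_distrib]
    calc p ℓ ≤ α ℓ + matFrobNorm (fun i q => ∑ j, W ℓ i j * Da ℓ.castSucc 0 j q) := by
          rw [hpdef]
          simp only []
          rw [hveq]
          exact matFrobNorm_add_le _ _
      _ ≤ α ℓ + Wstar * d ℓ.castSucc := by
          refine add_le_add_right ?_ _
          refine le_trans (frob_mul_le (W ℓ) (Da ℓ.castSucc 0)) ?_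
          exact mul_le_mul_of_nonneg_right (hWl ℓ) (hd0' _)
  have hd00 : d 0 = 0 := by
    rw [hddef]
    simp only [hDa0 0]
    exact matFrobNorm_zero
  have hdsucc : ∀ ℓ : Fin (L₀ + 1), d ℓ.succ ≤ JΦm * σ := by
    intro ℓ
    have h1 : Da ℓ.succ 0 = fderiv ℝ (Φ ℓ) (Xfun W) v := by
      rw [hDasucc ℓ 0, hx0, hvdef]
    rw [hddef]
    simp only [h1]
    exact hJb ℓ v
  -- truncated first derivative bound
  have hdsucc' : ∀ ℓ : Fin (L₀ + 1), d ℓ.succ ≤ JΦm *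
      Real.sqrt (∑ k ∈ Finset.univ.filter (fun k : Fin (L₀ + 1) => (k : ℕ) < ℓ.val + 1),
        p k ^ 2) := by
    intro ℓ
    have h1 : Da ℓ.succ 0 = fderiv ℝ (Φ ℓ) (Xfun W) (fun i => if i ≤ ℓ then v i else 0) := by
      rw [hDasucc ℓ 0, hx0, hvdef, htruncEq ℓ]
    have h2 : d ℓ.succ ≤ JΦm * tupNorm (fun i => if i ≤ ℓ then v i else 0) := by
      rw [hddef]
      simp only [h1]
      exact hJb ℓ _
    refine le_trans h2 (mul_le_mul_of_nonneg_left (le_of_eq ?_) hJm0)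
    have h3 : tupNorm (fun i : Fin (L₀ + 1) => if i ≤ ℓ then v i else 0) ^ 2
        = ∑ k ∈ Finset.univ.filter (fun k : Fin (L₀ + 1) => (k : ℕ) < ℓ.val + 1), p k ^ 2 := by
      rw [tupNorm_sq]
      rw [Finset.sum_filter]
      refine Finset.sum_congr rfl fun k _ => ?_
      by_cases hk : k ≤ ℓ
      · rw [if_pos hk, if_pos (by exact Nat.lt_succ_of_le hk)]
      · rw [if_neg hk, if_neg (by
          intro hcon
          exact hk (Fin.le_def.mpr (Nat.lt_succ_iff.mp hcon)))]
        rw [matFrobNorm_zero]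
        ring
    rw [← h3, Real.sqrt_sq (tupNorm_nonneg _)]

  -- ### First-order induction
  have h1c : (0:ℝ) ≤ 2 * JΦm ^ 2 * Wstar ^ 2 := by positivity
  have hbase1 : (1:ℝ) ≤ 1 + 2 * JΦm ^ 2 * Wstar ^ 2 := by linarith
  have huniv : ∀ M : ℕ, L₀ + 1 ≤ M →
      Finset.univ.filter (fun k : Fin (L₀ + 1) => (k : ℕ) < M) = Finset.univ := fun M hM =>
    Finset.filter_true_of_mem (fun k _ => lt_of_lt_of_le k.isLt hM)
  have hpsq : ∀ ℓ : Fin (L₀ + 1), p ℓ ^ 2 ≤ 2 * α ℓ ^ 2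
      + 2 * JΦm ^ 2 * Wstar ^ 2
        * (∑ k ∈ Finset.univ.filter (fun k : Fin (L₀ + 1) => (k : ℕ) < ℓ.val), p k ^ 2) := by
    intro ℓ
    have hPnn : 0 ≤ ∑ k ∈ Finset.univ.filter (fun k : Fin (L₀ + 1) => (k : ℕ) < ℓ.val),
        p k ^ 2 := Finset.sum_nonneg fun k _ => sq_nonneg _
    have hdc : d ℓ.castSucc ^ 2 ≤ JΦm ^ 2
        * ∑ k ∈ Finset.univ.filter (fun k : Fin (L₀ + 1) => (k : ℕ) < ℓ.val), p k ^ 2 := by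
      rcases Nat.eq_zero_or_pos ℓ.val with h0 | hpos
      · have hcs0 : ℓ.castSucc = 0 := by
          apply Fin.ext; simpa using h0
        rw [hcs0, hd00]
        nlinarith [mul_nonneg (sq_nonneg JΦm) hPnn]
      · have hk0lt : ℓ.val - 1 < L₀ + 1 := by omega
        set k0 : Fin (L₀ + 1) := ⟨ℓ.val - 1, hk0lt⟩ with hk0
        have hcs : ℓ.castSucc = k0.succ := by
          apply Fin.ext
          simp only [Fin.coe_castSucc, Fin.val_succ, hk0]
          omega
        have hval : k0.val + 1 = ℓ.val := by
          simp only [hk0]; omega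
        rw [hcs]
        have h2 := hdsucc' k0
        rw [hval] at h2
        calc d k0.succ ^ 2
            ≤ (JΦm * Real.sqrt (∑ k ∈ Finset.univ.filter
                (fun k : Fin (L₀ + 1) => (k : ℕ) < ℓ.val), p k ^ 2)) ^ 2 :=
              pow_le_pow_left₀ (hd0' k0.succ) h2 2
          _ = JΦm ^ 2 * ∑ k ∈ Finset.univ.filter
                (fun k : Fin (L₀ + 1) => (k : ℕ) < ℓ.val), p k ^ 2 := by
              rw [mul_pow, Real.sq_sqrt hPnn]
    have h2 : p ℓ ^ 2 ≤ (α ℓ + Wstar * d ℓ.castSucc) ^ 2 :=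
      pow_le_pow_left₀ (hp0 ℓ) (hvdec ℓ) 2
    have hdc2 := mul_le_mul_of_nonneg_left hdc (by positivity : (0:ℝ) ≤ 2 * Wstar ^ 2)
    nlinarith [sq_nonneg (α ℓ - Wstar * d ℓ.castSucc)]
  have hprefix : ∀ m : ℕ,
      (∑ k ∈ Finset.univ.filter (fun k : Fin (L₀ + 1) => (k : ℕ) < m), p k ^ 2)
        ≤ 2 * (1 + 2 * JΦm ^ 2 * Wstar ^ 2) ^ m
          * (∑ k ∈ Finset.univ.filter (fun k : Fin (L₀ + 1) => (k : ℕ) < m), α k ^ 2) := by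
    intro m
    induction m with
    | zero => simp
    | succ m ih =>
      have hS0 : 0 ≤ ∑ k ∈ Finset.univ.filter (fun k : Fin (L₀ + 1) => (k : ℕ) < m),
          α k ^ 2 := Finset.sum_nonneg fun k _ => sq_nonneg _
      have hpowm : (1:ℝ) ≤ (1 + 2 * JΦm ^ 2 * Wstar ^ 2) ^ m := one_le_pow₀ hbase1
      have hpow1 : (1:ℝ) ≤ (1 + 2 * JΦm ^ 2 * Wstar ^ 2) ^ (m + 1) := one_le_pow₀ hbase1
      rcases Nat.lt_or_ge m (L₀ + 1) with hm | hm
      · set ℓm : Fin (L₀ + 1) := ⟨m, hm⟩ with hℓm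
        have hmem : ℓm ∉ Finset.univ.filter (fun k : Fin (L₀ + 1) => (k : ℕ) < m) := by
          simp [hℓm]
        have hins : Finset.univ.filter (fun k : Fin (L₀ + 1) => (k : ℕ) < m + 1)
            = insert ℓm (Finset.univ.filter (fun k : Fin (L₀ + 1) => (k : ℕ) < m)) := by
          ext k
          simp only [Finset.mem_filter, Finset.mem_univ, true_and, Finset.mem_insert,
            Fin.ext_iff, hℓm]
          omega
        rw [hins, Finset.sum_insert hmem, Finset.sum_insert hmem]
        have hps := hpsq ℓm
        have hPm0 : 0 ≤ ∑ k ∈ Finset.univ.filter (fun k : Fin (L₀ + 1) => (k : ℕ) < m),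
            p k ^ 2 := Finset.sum_nonneg fun k _ => sq_nonneg _
        have hprod : (1:ℝ) ≤ (1 + 2 * JΦm ^ 2 * Wstar ^ 2) ^ m
            * (1 + 2 * JΦm ^ 2 * Wstar ^ 2) := by nlinarith
        have hcP := mul_le_mul_of_nonneg_left ih
          (show (0:ℝ) ≤ 1 + 2 * JΦm ^ 2 * Wstar ^ 2 by linarith)
        have hsucc_eq : (1 + 2 * JΦm ^ 2 * Wstar ^ 2) ^ (m + 1)
            = (1 + 2 * JΦm ^ 2 * Wstar ^ 2) ^ m * (1 + 2 * JΦm ^ 2 * Wstar ^ 2) :=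
          pow_succ _ _
        rw [hsucc_eq]
        nlinarith [sq_nonneg (α ℓm)]
      · rw [huniv m hm] at ih
        rw [huniv (m + 1) (by omega)]
        refine le_trans ih ?_
        have hmono : (1 + 2 * JΦm ^ 2 * Wstar ^ 2) ^ m
            ≤ (1 + 2 * JΦm ^ 2 * Wstar ^ 2) ^ (m + 1) :=
          pow_le_pow_right₀ hbase1 (Nat.le_succ m)
        have hSA : 0 ≤ ∑ k : Fin (L₀ + 1), α k ^ 2 :=
          Finset.sum_nonneg fun k _ => sq_nonneg _
        nlinarith
  have hΓsq : Γ ^ 2 = 2 * (1 + 2 * JΦm ^ 2 * Wstar ^ 2) ^ (L₀ + 1) := by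
    have hb : (0:ℝ) ≤ 1 + 2 * JΦm ^ 2 * Wstar ^ 2 := by linarith
    rw [hΓ, mul_pow, Real.sq_sqrt (by norm_num : (0:ℝ) ≤ 2)]
    congr 1
    rw [← Real.rpow_natCast ((1 + 2 * JΦm ^ 2 * Wstar ^ 2) ^ (((L₀:ℝ) + 1) / 2)) 2,
      ← Real.rpow_mul hb]
    rw [show (((L₀:ℝ) + 1) / 2) * (2:ℕ) = ((L₀ + 1 : ℕ) : ℝ) by push_cast; ring]
    exact Real.rpow_natCast _ _
  have hσsq : σ ^ 2 ≤ Γ ^ 2 * ∑ ℓ, α ℓ ^ 2 := by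
    have h1 : σ ^ 2 = ∑ ℓ, p ℓ ^ 2 := by
      rw [hσdef, tupNorm_sq]
    have h2 := hprefix (L₀ + 1)
    rw [huniv (L₀ + 1) le_rfl] at h2
    rw [h1, hΓsq]
    exact h2
  have hSA0 : 0 ≤ ∑ ℓ, α ℓ ^ 2 := Finset.sum_nonneg fun k _ => sq_nonneg _
  have hσsq0 : 0 ≤ Γ ^ 2 * ∑ ℓ, α ℓ ^ 2 := le_trans (sq_nonneg σ) hσsq

  -- ### Second-order estimates
  have he00 : e 0 = 0 := by
    rw [hedef]
    simp only [hDDa0]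
    exact matFrobNorm_zero
  have hudec : ∀ ℓ, qn ℓ ≤ 2 * β ℓ * d ℓ.castSucc + Wstar * e ℓ.castSucc := by
    intro ℓ
    have hueq : u ℓ = ((2:ℝ) • (fun i q => ∑ j, ΔW ℓ i j * Da ℓ.castSucc 0 j q))
        + (fun i q => ∑ j, W ℓ i j * deriv (Da ℓ.castSucc) 0 j q) := by
      rw [huf ℓ]
      funext i q
      simp only [Pi.add_apply, Pi.smul_apply, smul_eq_mul]
      rw [Finset.sum_add_distrib, Finset.mul_sum]
    calc qn ℓ ≤ matFrobNorm ((2:ℝ) • (fun i q => ∑ j, ΔW ℓ i j * Da ℓ.castSucc 0 j q))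
          + matFrobNorm (fun i q => ∑ j, W ℓ i j * deriv (Da ℓ.castSucc) 0 j q) := by
          rw [hqdef]
          simp only []
          rw [hueq]
          exact matFrobNorm_add_le _ _
      _ ≤ 2 * β ℓ * d ℓ.castSucc + Wstar * e ℓ.castSucc := by
          refine add_le_add ?_ ?_
          · rw [matFrobNorm_smul, abs_of_nonneg (by norm_num : (0:ℝ) ≤ 2)]
            have h1 := frob_mul_le (ΔW ℓ) (Da ℓ.castSucc 0)
            nlinarith [hd0' ℓ.castSucc]
          · refine le_trans (frob_mul_le (W ℓ) (deriv (Da ℓ.castSucc) 0)) ?_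
            exact mul_le_mul_of_nonneg_right (hWl ℓ) (he0 _)
  have hdcastb : ∀ ℓ : Fin (L₀ + 1), d ℓ.castSucc ≤ JΦm * σ := by
    intro ℓ
    rcases Nat.eq_zero_or_pos ℓ.val with h0 | hpos
    · have hcs0 : ℓ.castSucc = 0 := by apply Fin.ext; simpa using h0
      rw [hcs0, hd00]
      exact mul_nonneg hJm0 hσ0
    · have hk0lt : ℓ.val - 1 < L₀ + 1 := by omega
      have hcs : ℓ.castSucc = (⟨ℓ.val - 1, hk0lt⟩ : Fin (L₀ + 1)).succ := by
        apply Fin.ext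
        simp only [Fin.coe_castSucc, Fin.val_succ]
        omega
      rw [hcs]
      exact hdsucc _
  have hecastb : ∀ ℓ : Fin (L₀ + 1), e ℓ.castSucc ≤ HΦm * σ ^ 2
      + JΦm * Wstar⁻¹ * 0 + JΦm *
        (∑ k ∈ Finset.univ.filter (fun k : Fin (L₀ + 1) => (k : ℕ) < ℓ.val), qn k) := by
    intro ℓ
    have hQnn : 0 ≤ ∑ k ∈ Finset.univ.filter (fun k : Fin (L₀ + 1) => (k : ℕ) < ℓ.val),
        qn k := Finset.sum_nonneg fun k _ => hq0 k
    rcases Nat.eq_zero_or_pos ℓ.val with h0 | hpos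
    · have hcs0 : ℓ.castSucc = 0 := by apply Fin.ext; simpa using h0
      rw [hcs0, he00]
      have : 0 ≤ HΦm * σ ^ 2 := mul_nonneg hHm0 (sq_nonneg σ)
      nlinarith [mul_nonneg hJm0 hQnn]
    · have hk0lt : ℓ.val - 1 < L₀ + 1 := by omega
      set k0 : Fin (L₀ + 1) := ⟨ℓ.val - 1, hk0lt⟩ with hk0
      have hcs : ℓ.castSucc = k0.succ := by
        apply Fin.ext
        simp only [Fin.coe_castSucc, Fin.val_succ, hk0]
        omega
      have hval : k0.val + 1 = ℓ.val := by simp only [hk0]; omega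
      rw [hcs]
      have heq : deriv (Da k0.succ) 0
          = (fderiv ℝ (fderiv ℝ (Φ k0)) (Xfun W) v) v + fderiv ℝ (Φ k0) (Xfun W) u :=
        hDDasucc k0
      have htri : e k0.succ ≤ matFrobNorm ((fderiv ℝ (fderiv ℝ (Φ k0)) (Xfun W) v) v)
          + matFrobNorm (fderiv ℝ (Φ k0) (Xfun W) u) := by
        rw [hedef]
        simp only [heq]
        exact matFrobNorm_add_le _ _
      have hterm1 : matFrobNorm ((fderiv ℝ (fderiv ℝ (Φ k0)) (Xfun W) v) v)
          ≤ HΦm * σ ^ 2 := by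
        have := hHb k0 v
        rwa [← hσdef] at this
      have hterm2 : matFrobNorm (fderiv ℝ (Φ k0) (Xfun W) u) ≤ JΦm *
          (∑ k ∈ Finset.univ.filter (fun k : Fin (L₀ + 1) => (k : ℕ) < ℓ.val), qn k) := by
        rw [htruncEq k0 u]
        refine le_trans (hJb k0 _) (mul_le_mul_of_nonneg_left ?_ hJm0)
        have h3 : tupNorm (fun i : Fin (L₀ + 1) => if i ≤ k0 then u i else 0) ^ 2
            = ∑ k ∈ Finset.univ.filter (fun k : Fin (L₀ + 1) => (k : ℕ) < ℓ.val),
              qn k ^ 2 := by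
          rw [tupNorm_sq, ← hval, Finset.sum_filter]
          refine Finset.sum_congr rfl fun k _ => ?_
          by_cases hk : k ≤ k0
          · rw [if_pos hk, if_pos (by exact Nat.lt_succ_of_le hk)]
          · rw [if_neg hk, if_neg (by
              intro hcon
              exact hk (Fin.le_def.mpr (Nat.lt_succ_iff.mp hcon)))]
            rw [matFrobNorm_zero]
            ring
        have h4 : tupNorm (fun i : Fin (L₀ + 1) => if i ≤ k0 then u i else 0)
            = Real.sqrt (∑ k ∈ Finset.univ.filter
              (fun k : Fin (L₀ + 1) => (k : ℕ) < ℓ.val), qn k ^ 2) := by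
          rw [← h3, Real.sqrt_sq (tupNorm_nonneg _)]
        rw [h4]
        refine le_trans (Real.sqrt_le_sqrt (sum_sq_le_sq_sum fun k _ => hq0 k)) ?_
        rw [Real.sqrt_sq hQnn]
      nlinarith [htri, hterm1, hterm2]
  have hc00 : (0:ℝ) ≤ JΦm * Wstar := mul_nonneg hJm0 hW0
  have hg0 : ∀ ℓ, (0:ℝ) ≤ 2 * β ℓ * JΦm * σ + Wstar * HΦm * σ ^ 2 := by
    intro ℓ
    nlinarith [mul_nonneg (mul_nonneg (mul_nonneg (by norm_num : (0:ℝ) ≤ 2) (hβ0 ℓ)) hJm0) hσ0,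
      mul_nonneg (mul_nonneg hW0 hHm0) (sq_nonneg σ)]
  have hqb : ∀ ℓ : Fin (L₀ + 1), qn ℓ ≤ (2 * β ℓ * JΦm * σ + Wstar * HΦm * σ ^ 2)
      + JΦm * Wstar *
        (∑ k ∈ Finset.univ.filter (fun k : Fin (L₀ + 1) => (k : ℕ) < ℓ.val), qn k) := by
    intro ℓ
    have h1 := hudec ℓ
    have h2 := hdcastb ℓ
    have h3 := hecastb ℓ
    have hQnn : 0 ≤ ∑ k ∈ Finset.univ.filter (fun k : Fin (L₀ + 1) => (k : ℕ) < ℓ.val),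
        qn k := Finset.sum_nonneg fun k _ => hq0 k
    nlinarith [mul_nonneg (hβ0 ℓ) (mul_nonneg hJm0 hσ0), hβ0 ℓ, hW0,
      mul_le_mul_of_nonneg_left h2 (mul_nonneg (by norm_num : (0:ℝ) ≤ 2) (hβ0 ℓ)),
      mul_le_mul_of_nonneg_left h3 hW0]
  have hRrec : ∀ m : ℕ,
      (∑ k ∈ Finset.univ.filter (fun k : Fin (L₀ + 1) => (k : ℕ) < m + 1), qn k)
        ≤ (1 + JΦm * Wstar) ^ m *
          (∑ k ∈ Finset.univ.filter (fun k : Fin (L₀ + 1) => (k : ℕ) < m + 1),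
            (2 * β k * JΦm * σ + Wstar * HΦm * σ ^ 2)) := by
    intro m
    induction m with
    | zero =>
      have h0 : Finset.univ.filter (fun k : Fin (L₀ + 1) => (k : ℕ) < 1)
          = {(0 : Fin (L₀ + 1))} := by
        ext k
        simp only [Finset.mem_filter, Finset.mem_univ, true_and, Finset.mem_singleton, Fin.ext_iff, Fin.val_zero]
        omega
      rw [h0]
      simp only [Finset.sum_singleton, pow_zero, one_mul]
      have := hqb 0
      simpa using this
    | succ m ih =>
      have hpowm : (1:ℝ) ≤ (1 + JΦm * Wstar) ^ m := one_le_pow₀ (by linarith)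
      have hpow1 : (1:ℝ) ≤ (1 + JΦm * Wstar) ^ (m + 1) := one_le_pow₀ (by linarith)
      rcases Nat.lt_or_ge (m + 1) (L₀ + 1) with hm | hm
      · set ℓm : Fin (L₀ + 1) := ⟨m + 1, hm⟩ with hℓm
        have hmem : ℓm ∉ Finset.univ.filter (fun k : Fin (L₀ + 1) => (k : ℕ) < m + 1) := by
          simp [hℓm]
        have hins : Finset.univ.filter (fun k : Fin (L₀ + 1) => (k : ℕ) < m + 2)
            = insert ℓm (Finset.univ.filter (fun k : Fin (L₀ + 1) => (k : ℕ) < m + 1)) := by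
          ext k
          simp only [Finset.mem_filter, Finset.mem_univ, true_and, Finset.mem_insert,
            Fin.ext_iff, hℓm]
          omega
        rw [hins, Finset.sum_insert hmem, Finset.sum_insert hmem]
        have hq1 := hqb ℓm
        have hG0 : 0 ≤ ∑ k ∈ Finset.univ.filter (fun k : Fin (L₀ + 1) => (k : ℕ) < m + 1),
            (2 * β k * JΦm * σ + Wstar * HΦm * σ ^ 2) :=
          Finset.sum_nonneg fun k _ => hg0 k
        have hsucc_eq : (1 + JΦm * Wstar) ^ (m + 1)
            = (1 + JΦm * Wstar) ^ m * (1 + JΦm * Wstar) := pow_succ _ _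
        have hcQ := mul_le_mul_of_nonneg_left ih hc00
        rw [hsucc_eq]
        nlinarith [hg0 ℓm, Finset.sum_nonneg
          (fun (k : Fin (L₀ + 1)) (_ : k ∈ Finset.univ.filter
            (fun k : Fin (L₀ + 1) => (k : ℕ) < m + 1)) => hq0 k)]
      · rw [huniv (m + 1) hm] at ih
        rw [huniv (m + 2) (by omega)]
        refine le_trans ih ?_
        have hmono : (1 + JΦm * Wstar) ^ m ≤ (1 + JΦm * Wstar) ^ (m + 1) :=
          pow_le_pow_right₀ (by linarith) (Nat.le_succ m)
        have hG0 : 0 ≤ ∑ k : Fin (L₀ + 1), (2 * β k * JΦm * σ + Wstar * HΦm * σ ^ 2) :=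
          Finset.sum_nonneg fun k _ => hg0 k
        nlinarith
  -- total second-order bound
  have hΘ0 : 0 ≤ Θ := by
    rw [hΘ]
    exact pow_nonneg (by linarith) L₀
  have hT : tupNorm u ≤ Θ * (2 * JΦm * σ * (∑ ℓ, β ℓ)
      + ((L₀:ℝ) + 1) * (Wstar * HΦm * σ ^ 2)) := by
    have h1 : tupNorm u ≤ ∑ ℓ, qn ℓ := by
      have h2 : tupNorm u ^ 2 = ∑ ℓ, qn ℓ ^ 2 := tupNorm_sq u
      have h3 : tupNorm u = Real.sqrt (∑ ℓ, qn ℓ ^ 2) := by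
        rw [← h2, Real.sqrt_sq (tupNorm_nonneg _)]
      rw [h3]
      refine le_trans (Real.sqrt_le_sqrt (sum_sq_le_sq_sum fun k _ => hq0 k)) ?_
      rw [Real.sqrt_sq (Finset.sum_nonneg fun k _ => hq0 k)]
    have h4 := hRrec L₀
    rw [huniv (L₀ + 1) le_rfl] at h4
    have h5 : (∑ k : Fin (L₀ + 1), (2 * β k * JΦm * σ + Wstar * HΦm * σ ^ 2))
        = 2 * JΦm * σ * (∑ ℓ, β ℓ) + ((L₀:ℝ) + 1) * (Wstar * HΦm * σ ^ 2) := by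
      rw [Finset.sum_add_distrib, Finset.sum_const, Finset.card_univ, Fintype.card_fin]
      rw [Finset.mul_sum]
      congr 1
      · exact Finset.sum_congr rfl fun ℓ _ => by ring
      · push_cast
        ring
    rw [← hΘ, h5] at h4
    exact le_trans h1 h4
  -- ### Final assembly
  have hHf0 : 0 ≤ Hf := hHfb.1
  have hJf0 : 0 ≤ Jf := hJfb.1
  have habs : |(fderiv ℝ (fderiv ℝ lossL) W ΔW) ΔW| ≤ Hf * σ ^ 2 + Jf * tupNorm u := by
    rw [hmain]
    refine le_trans (abs_add_le _ _) (add_le_add ?_ ?_)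
    · have := hHfb.2 v
      rwa [← hσdef] at this
    · exact hJfb.2 u
  have hB0' : 0 ≤ ∑ ℓ, β ℓ := Finset.sum_nonneg fun k _ => hβ0 k
  have hBsq0 : 0 ≤ ∑ ℓ, β ℓ ^ 2 := Finset.sum_nonneg fun k _ => sq_nonneg _
  have hamg : 2 * Jf * σ * JΦm * (∑ ℓ, β ℓ)
      ≤ ((L₀:ℝ) + 1) * (Jf ^ 2 * σ ^ 2) + JΦm ^ 2 * (∑ ℓ, β ℓ ^ 2) := by
    have h1 : ∀ ℓ : Fin (L₀ + 1), 2 * (Jf * σ) * (JΦm * β ℓ)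
        ≤ Jf ^ 2 * σ ^ 2 + JΦm ^ 2 * β ℓ ^ 2 := fun ℓ => by
      nlinarith [sq_nonneg (Jf * σ - JΦm * β ℓ)]
    have h2 : (∑ ℓ : Fin (L₀ + 1), 2 * (Jf * σ) * (JΦm * β ℓ))
        ≤ ∑ ℓ : Fin (L₀ + 1), (Jf ^ 2 * σ ^ 2 + JΦm ^ 2 * β ℓ ^ 2) :=
      Finset.sum_le_sum fun ℓ _ => h1 ℓ
    have h3 : (∑ ℓ : Fin (L₀ + 1), 2 * (Jf * σ) * (JΦm * β ℓ))
        = 2 * Jf * σ * JΦm * (∑ ℓ, β ℓ) := by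
      rw [Finset.mul_sum]
      exact Finset.sum_congr rfl fun ℓ _ => by ring
    have h4 : (∑ ℓ : Fin (L₀ + 1), (Jf ^ 2 * σ ^ 2 + JΦm ^ 2 * β ℓ ^ 2))
        = ((L₀:ℝ) + 1) * (Jf ^ 2 * σ ^ 2) + JΦm ^ 2 * (∑ ℓ, β ℓ ^ 2) := by
      rw [Finset.sum_add_distrib, Finset.sum_const, Finset.card_univ, Fintype.card_fin,
        Finset.mul_sum]
      push_cast
      ring
    rw [← h3, ← h4]
    exact h2
  have step2 : Jf * tupNorm u ≤ Jf * Θ * (2 * JΦm * σ * (∑ ℓ, β ℓ))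
      + Jf * Θ * (((L₀:ℝ) + 1) * (Wstar * HΦm * σ ^ 2)) := by
    calc Jf * tupNorm u ≤ Jf * (Θ * (2 * JΦm * σ * (∑ ℓ, β ℓ)
          + ((L₀:ℝ) + 1) * (Wstar * HΦm * σ ^ 2))) := mul_le_mul_of_nonneg_left hT hJf0
      _ = Jf * Θ * (2 * JΦm * σ * (∑ ℓ, β ℓ))
          + Jf * Θ * (((L₀:ℝ) + 1) * (Wstar * HΦm * σ ^ 2)) := by ring
  have step3 : Jf * Θ * (2 * JΦm * σ * (∑ ℓ, β ℓ))
      ≤ Θ * (((L₀:ℝ) + 1) * (Jf ^ 2 * σ ^ 2)) + Θ * (JΦm ^ 2 * (∑ ℓ, β ℓ ^ 2)) := by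
    have h1 := mul_le_mul_of_nonneg_left hamg hΘ0
    calc Jf * Θ * (2 * JΦm * σ * (∑ ℓ, β ℓ))
        = Θ * (2 * Jf * σ * JΦm * (∑ ℓ, β ℓ)) := by ring
      _ ≤ Θ * (((L₀:ℝ) + 1) * (Jf ^ 2 * σ ^ 2) + JΦm ^ 2 * (∑ ℓ, β ℓ ^ 2)) := h1
      _ = Θ * (((L₀:ℝ) + 1) * (Jf ^ 2 * σ ^ 2)) + Θ * (JΦm ^ 2 * (∑ ℓ, β ℓ ^ 2)) := by ring
  have step4 : Hf * σ ^ 2 ≤ Hf * (Γ ^ 2 * ∑ ℓ, α ℓ ^ 2) := mul_le_mul_of_nonneg_left hσsq hHf0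
  have step5 : Jf * Θ * (((L₀:ℝ) + 1) * (Wstar * HΦm * σ ^ 2))
      ≤ Jf * Θ * (((L₀:ℝ) + 1) * (Wstar * HΦm * (Γ ^ 2 * ∑ ℓ, α ℓ ^ 2))) := by
    have hc : 0 ≤ Jf * Θ * (((L₀:ℝ) + 1) * (Wstar * HΦm)) := by
      have : (0:ℝ) ≤ (L₀:ℝ) + 1 := by positivity
      exact mul_nonneg (mul_nonneg hJf0 hΘ0) (mul_nonneg this (mul_nonneg hW0 hHm0))
    nlinarith [mul_le_mul_of_nonneg_left hσsq hc]
  have step6 : Θ * (((L₀:ℝ) + 1) * (Jf ^ 2 * σ ^ 2))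
      ≤ Θ * (((L₀:ℝ) + 1) * (Jf ^ 2 * (Γ ^ 2 * ∑ ℓ, α ℓ ^ 2))) := by
    have hc : 0 ≤ Θ * (((L₀:ℝ) + 1) * Jf ^ 2) := by
      have h1 : (0:ℝ) ≤ (L₀:ℝ) + 1 := by positivity
      exact mul_nonneg hΘ0 (mul_nonneg h1 (sq_nonneg Jf))
    nlinarith [mul_le_mul_of_nonneg_left hσsq hc]
  have hfinal : |(fderiv ℝ (fderiv ℝ lossL) W ΔW) ΔW|
      ≤ CF * (∑ ℓ, α ℓ ^ 2) + Cop * (∑ ℓ, β ℓ ^ 2) := by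
    rw [hCF, hCop]
    linarith [habs, step2, step3, step4, step5, step6]
  have hαrw : (∑ ℓ : Fin (L₀ + 1), α ℓ ^ 2)
      = ∑ ℓ : Fin (L₀ + 1), ∑ i, ∑ t, (∑ j, ΔW ℓ i j * Afun W ℓ.castSucc j t) ^ 2 := by
    refine Finset.sum_congr rfl fun ℓ _ => ?_
    rw [hαdef]
    dsimp only
    rw [matFrobNorm, Real.sq_sqrt (by positivity)]
  have hβrw : (∑ ℓ : Fin (L₀ + 1), β ℓ ^ 2)
      = ∑ ℓ : Fin (L₀ + 1), (opNormM (Matrix.of (ΔW ℓ))) ^ 2 := by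
    refine Finset.sum_congr rfl fun ℓ _ => ?_
    rw [hβdef]
  rw [← hαrw, ← hβrw]
  exact hfinal
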